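/- Let r = (r_1,...,r_n) and r' = (r'_1,...,r'_n) be nonnegative real vectors. Let k with 1 ≤ k ≤ n be such that r'_i ≥ r'_j for all i ≤ k < j. Suppose δ_i := r_i - r'_i ≥ 0 for i ≤ k and δ_j := r'_j - r_j ≥ 0 for j > k. Let D = min_{i ≤ k} r_i - max_{j > k} r_j and Δ = Σ_{i ≤ k} δ_i. If Δ ≥ Σ_{j > k} δ_j, then ‖r'‖² ≤ ‖r‖² - D·Δ, where ‖·‖ denotes the Euclidean norm. -/

import Mathlib

open Finset

/-- Technical lemma on the 2-norm of surplus vectors (Lemma "technical lemma"). -/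
theorem stmt_0 (n k : ℕ) (hk1 : 1 ≤ k) (hkn : k < n)
    (r r' : Fin n → ℝ)
    (hr : ∀ i, 0 ≤ r i) (hr' : ∀ i, 0 ≤ r' i)
    (hord : ∀ i j : Fin n, i.val < k → k ≤ j.val → r' j ≤ r' i)
    (hδ1 : ∀ i : Fin n, i.val < k → 0 ≤ r i - r' i)
    (hδ2 : ∀ j : Fin n, k ≤ j.val → 0 ≤ r' j - r j)
    (S1 : Finset (Fin n)) (S2 : Finset (Fin n))
    (hS1 : S1 = univ.filter (fun i => i.val < k))
    (hS2 : S2 = univ.filter (fun j => k ≤ j.val))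
    (hS1ne : S1.Nonempty) (hS2ne : S2.Nonempty)
    (D Δ : ℝ)
    (hD : D = S1.inf' hS1ne r - S2.sup' hS2ne r)
    (hΔ : Δ = ∑ i ∈ S1, (r i - r' i))
    (hbal : ∑ j ∈ S2, (r' j - r j) ≤ Δ) :
    ∑ i, (r' i) ^ 2 ≤ ∑ i, (r i) ^ 2 - D * Δ := by
  set m1 := S1.inf' hS1ne r with hm1def
  set M2 := S2.sup' hS2ne r with hM2def
  set m' := S1.inf' hS1ne r' with hm'def
  have hmemS1 : ∀ i : Fin n, i ∈ S1 ↔ i.val < k := by intro i; simp [hS1]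
  have hmemS2 : ∀ j : Fin n, j ∈ S2 ↔ k ≤ j.val := by intro j; simp [hS2]
  have hpart : ∀ f : Fin n → ℝ, ∑ i, f i = ∑ i ∈ S1, f i + ∑ i ∈ S2, f i := by
    intro f
    rw [hS1, hS2, ← Finset.sum_filter_add_sum_filter_not univ (fun i => i.val < k)]
    congr 1
    apply Finset.sum_congr _ (fun _ _ => rfl)
    ext j; simp [not_lt]
  have hm1 : ∀ i ∈ S1, m1 ≤ r i := fun i hi => Finset.inf'_le r hi
  have hM2 : ∀ j ∈ S2, r j ≤ M2 := fun j hj => Finset.le_sup' r hj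
  have hm' : ∀ i ∈ S1, m' ≤ r' i := fun i hi => Finset.inf'_le r' hi
  have hm'0 : 0 ≤ m' := Finset.le_inf' hS1ne r' (fun i _ => hr' i)
  have hM20 : 0 ≤ M2 := by
    obtain ⟨j, hj⟩ := hS2ne
    exact le_trans (hr j) (Finset.le_sup' r hj)
  have hr'le : ∀ j ∈ S2, r' j ≤ m' := by
    intro j hj
    apply Finset.le_inf'
    intro i hi
    exact hord i j ((hmemS1 i).mp hi) ((hmemS2 j).mp hj)
  have hδ1' : ∀ i ∈ S1, 0 ≤ r i - r' i := fun i hi => hδ1 i ((hmemS1 i).mp hi)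
  have hδ2' : ∀ j ∈ S2, 0 ≤ r' j - r j := fun j hj => hδ2 j ((hmemS2 j).mp hj)
  set E := ∑ j ∈ S2, (r' j - r j) with hE
  have hE0 : 0 ≤ E := Finset.sum_nonneg hδ2'
  have hΔ0 : 0 ≤ Δ := le_trans hE0 hbal
  have hA : m1 * Δ + ∑ i ∈ S1, (r i - r' i) * r' i ≤ ∑ i ∈ S1, ((r i) ^ 2 - (r' i) ^ 2) := by
    rw [hΔ, Finset.mul_sum, ← Finset.sum_add_distrib]
    apply Finset.sum_le_sum
    intro i hi
    have h1 := hm1 i hi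
    have h2 := hδ1' i hi
    nlinarith [mul_le_mul_of_nonneg_left h1 h2]
  have hB : -(M2 * E) - ∑ j ∈ S2, (r' j - r j) * r' j ≤ ∑ j ∈ S2, ((r j) ^ 2 - (r' j) ^ 2) := by
    rw [hE, Finset.mul_sum, ← Finset.sum_neg_distrib, ← Finset.sum_sub_distrib]
    apply Finset.sum_le_sum
    intro j hj
    have h1 := hM2 j hj
    have h2 := hδ2' j hj
    nlinarith [mul_le_mul_of_nonneg_left h1 h2]
  have h1 : ∑ j ∈ S2, (r' j - r j) * r' j ≤ m' * E := by
    rw [hE, Finset.mul_sum]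
    apply Finset.sum_le_sum
    intro j hj
    have := hr'le j hj
    have := hδ2' j hj
    nlinarith
  have h2 : m' * E ≤ m' * Δ := mul_le_mul_of_nonneg_left hbal hm'0
  have h3 : m' * Δ ≤ ∑ i ∈ S1, (r i - r' i) * r' i := by
    rw [hΔ, Finset.mul_sum]
    apply Finset.sum_le_sum
    intro i hi
    have := hm' i hi
    have := hδ1' i hi
    nlinarith
  have h4 : M2 * E ≤ M2 * Δ := mul_le_mul_of_nonneg_left hbal hM20
  have e1 : ∑ i ∈ S1, ((r i) ^ 2 - (r' i) ^ 2)
      = ∑ i ∈ S1, (r i) ^ 2 - ∑ i ∈ S1, (r' i) ^ 2 := Finset.sum_sub_distrib _ _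
  have e2 : ∑ j ∈ S2, ((r j) ^ 2 - (r' j) ^ 2)
      = ∑ j ∈ S2, (r j) ^ 2 - ∑ j ∈ S2, (r' j) ^ 2 := Finset.sum_sub_distrib _ _
  have p1 := hpart (fun i => (r i) ^ 2)
  have p2 := hpart (fun i => (r' i) ^ 2)
  have hDΔ : D * Δ = m1 * Δ - M2 * Δ := by rw [hD]; ring
  linarith
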